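/- Fix a ground truth Z ∈ O(d)^{⊗n} and let N_ε := {S ∈ ℝ^{nd×d} : d_F(S, Z) ≤ ε√n}. If X, Y ∈ N_ε with X, Y ∈ O(d)^{⊗n}, Q = sgn(YᵀX), and ε ≤ 1/√2, then ‖Zᵀ(X − YQ)‖_F ≤ 2ε√n · d_F(X, Y). -/

import Mathlib

open Matrix MeasureTheory ProbabilityTheory

noncomputable section

/-- Frobenius norm of a real matrix. -/
def frob {m k : Type*} [Fintype m] [Fintype k] (A : Matrix m k ℝ) : ℝ :=
  Real.sqrt (∑ i, ∑ j, (A i j) ^ 2)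

/-- Spectral (operator) norm of a real matrix: the `ℓ² → ℓ²` operator norm. -/
def spec {m k : Type*} [Fintype m] [Fintype k] [DecidableEq k] (A : Matrix m k ℝ) : ℝ :=
  ‖LinearMap.toContinuousLinearMap (Matrix.toEuclideanLin A)‖

/-- Smallest singular value of a real matrix. -/
def sigmaMin {m k : Type*} [Fintype m] [Fintype k] [DecidableEq k] (A : Matrix m k ℝ) : ℝ :=
  ⨅ x : {x : EuclideanSpace ℝ k // ‖x‖ = 1}, ‖Matrix.toEuclideanLin A x.1‖

/-- Nuclear norm (sum of singular values) of a square real matrix. -/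
def nuclearNorm {d : ℕ} (A : Matrix (Fin d) (Fin d) ℝ) : ℝ :=
  ∑ i, Real.sqrt ((by simpa using Matrix.isHermitian_conjTranspose_mul_self A : (Aᵀ * A).IsHermitian).eigenvalues i)

/-- `Q` is a `d × d` real orthogonal matrix. -/
def IsOrtho {d : ℕ} (Q : Matrix (Fin d) (Fin d) ℝ) : Prop :=
  Qᵀ * Q = 1 ∧ Q * Qᵀ = 1

/-- The square root `PosSemidef.sqrt` of a positive semidefinite real matrix, as defined in the
older Mathlib (removed since). -/
def psdSqrt {d : ℕ} {M : Matrix (Fin d) (Fin d) ℝ} (hM : M.PosSemidef) : Matrix (Fin d) (Fin d) ℝ :=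
  hM.1.eigenvectorUnitary.1 * diagonal ((↑) ∘ (Real.sqrt ∘ hM.1.eigenvalues)) *
    (star hM.1.eigenvectorUnitary : Matrix (Fin d) (Fin d) ℝ)

open scoped Classical in
/-- The matrix sign function `sgn(A) = A (AᵀA)^{-1/2} = U Vᵀ` for `A = U Σ Vᵀ`
(junk value if `AᵀA` is not positive semidefinite, which never happens over `ℝ`). -/
def msgn {d : ℕ} (A : Matrix (Fin d) (Fin d) ℝ) : Matrix (Fin d) (Fin d) ℝ :=
  if h : (Aᵀ * A).PosSemidef then A * (psdSqrt h)⁻¹ else 1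

/-- The `i`-th `d × d` block of an `nd × d` block matrix. -/
def blk {d n : ℕ} (X : Matrix (Fin n × Fin d) (Fin d) ℝ) (i : Fin n) :
    Matrix (Fin d) (Fin d) ℝ :=
  Matrix.of fun a b => X (i, a) b

/-- `X ∈ O(d)^{⊗n}`: every `d × d` block of `X` is orthogonal. -/
def BlockOrtho {d n : ℕ} (X : Matrix (Fin n × Fin d) (Fin d) ℝ) : Prop :=
  ∀ i, IsOrtho (blk X i)

/-- Blockwise matrix sign function on `nd × d` block matrices. -/
def bsgn {d n : ℕ} (X : Matrix (Fin n × Fin d) (Fin d) ℝ) :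
    Matrix (Fin n × Fin d) (Fin d) ℝ :=
  Matrix.of fun p b => msgn (blk X p.1) p.2 b

/-- `d_F(X, Y) = min_{Q ∈ O(d)} ‖X - Y Q‖_F`. -/
def dF {d n : ℕ} (X Y : Matrix (Fin n × Fin d) (Fin d) ℝ) : ℝ :=
  ⨅ Q : {Q : Matrix (Fin d) (Fin d) ℝ // IsOrtho Q}, frob (X - Y * Q.1)

/-- The `(i, j)` block of an `nd × nd` block matrix. -/
def blk2 {d n : ℕ} (A : Matrix (Fin n × Fin d) (Fin n × Fin d) ℝ) (i j : Fin n) :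
    Matrix (Fin d) (Fin d) ℝ :=
  Matrix.of fun a b => A (i, a) (j, b)

/-- The `l`-th `nd × d` block column of an `nd × nd` block matrix. -/
def bcol {d n : ℕ} (W : Matrix (Fin n × Fin d) (Fin n × Fin d) ℝ) (l : Fin n) :
    Matrix (Fin n × Fin d) (Fin d) ℝ :=
  Matrix.of fun p b => W p (l, b)

/-- Projection onto the tangent space of `O(d)` at `X`: `P_{T_X}(G) = (G - X Gᵀ X)/2`. -/
def tanProj {d : ℕ} (X G : Matrix (Fin d) (Fin d) ℝ) : Matrix (Fin d) (Fin d) ℝ :=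
  (1 / 2 : ℝ) • (G - X * Gᵀ * X)

/-- The `i`-th block of the Euclidean gradient: `G_i = ∑_{j ≠ i} (X_i - A_{ij} X_j)`. -/
def Gblk {d n : ℕ} (A : Matrix (Fin n × Fin d) (Fin n × Fin d) ℝ)
    (X : Matrix (Fin n × Fin d) (Fin d) ℝ) (i : Fin n) : Matrix (Fin d) (Fin d) ℝ :=
  ∑ j ∈ Finset.univ.erase i, (blk X i - blk2 A i j * blk X j)

/-- One Riemannian gradient step before retraction:
`F_i = X_i - μ P_{T_{X_i}}(G_i)`, assembled as an `nd × d` block matrix. -/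
def Fstep {d n : ℕ} (A : Matrix (Fin n × Fin d) (Fin n × Fin d) ℝ) (μ : ℝ)
    (X : Matrix (Fin n × Fin d) (Fin d) ℝ) : Matrix (Fin n × Fin d) (Fin d) ℝ :=
  Matrix.of fun p b => (blk X p.1 - μ • tanProj (blk X p.1) (Gblk A X p.1)) p.2 b

/-- `Y` is an orthonormal matrix of eigenvectors for the top `d` eigenvalues of the
symmetric matrix `A`: its columns are orthonormal, its range is `A`-invariant, and the
Rayleigh quotient on its range dominates the Rayleigh quotient on its orthogonal
complement. -/
def IsTopEigvecs {d n : ℕ} (A : Matrix (Fin n × Fin d) (Fin n × Fin d) ℝ)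
    (Y : Matrix (Fin n × Fin d) (Fin d) ℝ) : Prop :=
  Yᵀ * Y = 1 ∧ (∃ Λ : Matrix (Fin d) (Fin d) ℝ, A * Y = Y * Λ) ∧
  ∀ v w : (Fin n × Fin d) → ℝ, (∃ c : Fin d → ℝ, v = Y.mulVec c) → Yᵀ.mulVec w = 0 →
    (w ⬝ᵥ w) * (v ⬝ᵥ A.mulVec v) ≥ (v ⬝ᵥ v) * (w ⬝ᵥ A.mulVec w)

/-- `W` is the symmetric block Gaussian noise matrix: `W` is symmetric, its diagonal
blocks vanish, each entry in an off-diagonal block `W_{ij}` (`i < j`) is standard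
Gaussian, and all these entries (over all blocks with `i < j`) are mutually
independent. -/
def IsGaussianNoise {d n : ℕ} {Ω : Type*} [MeasurableSpace Ω] (P : Measure Ω)
    (W : Ω → Matrix (Fin n × Fin d) (Fin n × Fin d) ℝ) : Prop :=
  (∀ p q, Measurable fun ω => W ω p q) ∧
  (∀ ω, (W ω)ᵀ = W ω) ∧
  (∀ ω (i : Fin n) (a b : Fin d), W ω (i, a) (i, b) = 0) ∧
  (∀ (i j : Fin n) (a b : Fin d), i < j →
    P.map (fun ω => W ω (i, a) (j, b)) = gaussianReal 0 1) ∧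
  iIndepFun
    (fun (e : {x : (Fin n × Fin d) × (Fin n × Fin d) // x.1.1 < x.2.1}) ω =>
      W ω e.1.1 e.1.2) P

/-- Leave-one-out noise: set the `l`-th block row and block column of `W` to zero. -/
def looNoise {d n : ℕ} (W : Matrix (Fin n × Fin d) (Fin n × Fin d) ℝ) (l : Fin n) :
    Matrix (Fin n × Fin d) (Fin n × Fin d) ℝ :=
  Matrix.of fun p q => if p.1 = l ∨ q.1 = l then 0 else W p q

/-- The Newton–Schulz iteration `S_0 = A`, `S_{t+1} = ½ S_t (3 I - S_tᵀ S_t)`. -/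
def nsIter {d : ℕ} (A : Matrix (Fin d) (Fin d) ℝ) : ℕ → Matrix (Fin d) (Fin d) ℝ
  | 0 => A
  | (t + 1) => (1 / 2 : ℝ) • (nsIter A t * ((3 : ℝ) • (1 : Matrix (Fin d) (Fin d) ℝ) - (nsIter A t)ᵀ * nsIter A t))


set_option linter.unusedSectionVars false
set_option maxHeartbeats 1000000

namespace AuxProof

variable {m k l r : Type*} [Fintype m] [Fintype k] [Fintype l] [Fintype r]

lemma sq_le_sq' {a b : ℝ} (hb : 0 ≤ b) (h : a^2 ≤ b^2) : a ≤ b := by nlinarith [sq_nonneg (a-b), sq_nonneg (a+b)]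

lemma frob_eq_sqrt_sum (A : Matrix m k ℝ) : frob A = Real.sqrt (∑ p : m × k, (A p.1 p.2)^2) := by
  rw [frob, ← Fintype.sum_prod_type']

lemma frob_nonneg (A : Matrix m k ℝ) : 0 ≤ frob A := Real.sqrt_nonneg _

lemma sq_frob (A : Matrix m k ℝ) : frob A ^ 2 = ∑ i, ∑ j, (A i j)^2 := by
  rw [frob, Real.sq_sqrt]; positivity

lemma ip_le (A B : Matrix m k ℝ) : (∑ i, ∑ j, A i j * B i j) ≤ frob A * frob B := by
  rw [frob_eq_sqrt_sum, frob_eq_sqrt_sum, ← Fintype.sum_prod_type']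
  exact Real.sum_mul_le_sqrt_mul_sqrt _ _ _

lemma frob_sq_trace (A : Matrix m k ℝ) : frob A ^ 2 = Matrix.trace (Aᵀ * A) := by
  rw [sq_frob, Matrix.trace]
  simp only [Matrix.diag, Matrix.mul_apply, Matrix.transpose_apply]
  rw [Finset.sum_comm]
  simp [sq]

lemma frob_transpose (A : Matrix m k ℝ) : frob Aᵀ = frob A := by
  rw [frob, frob, Finset.sum_comm]; rfl

lemma frob_add_le (A B : Matrix m k ℝ) : frob (A + B) ≤ frob A + frob B := by
  have h := ip_le A B
  apply sq_le_sq' (add_nonneg (frob_nonneg A) (frob_nonneg B))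
  rw [sq_frob]
  have : ∀ i j, ((A + B) i j)^2 = A i j ^2 + 2 * (A i j * B i j) + B i j ^2 := by
    intro i j; simp [Matrix.add_apply]; ring
  simp_rw [this, Finset.sum_add_distrib, ← Finset.mul_sum]
  have hA := sq_frob A; have hB := sq_frob B
  nlinarith [frob_nonneg A, frob_nonneg B]

lemma frob_sub_le (A B : Matrix m k ℝ) : frob (A - B) ≤ frob A + frob B := by
  have := frob_add_le A (-B)
  simpa [sub_eq_add_neg, frob, neg_sq] using this

lemma frob_mul_le (A : Matrix m k ℝ) (B : Matrix k l ℝ) : frob (A * B) ≤ frob A * frob B := by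
  apply sq_le_sq' (mul_nonneg (frob_nonneg A) (frob_nonneg B))
  rw [sq_frob]
  have hstep : ∀ i j, ((A * B) i j)^2 ≤ (∑ s, A i s ^2) * (∑ s, B s j ^2) := by
    intro i j
    rw [Matrix.mul_apply]
    exact Finset.sum_mul_sq_le_sq_mul_sq _ _ _
  calc ∑ i, ∑ j, ((A * B) i j)^2 ≤ ∑ i, ∑ j, (∑ s, A i s ^2) * (∑ s, B s j ^2) := by
        apply Finset.sum_le_sum; intro i _; apply Finset.sum_le_sum; intro j _; exact hstep i j
    _ = (∑ i, ∑ s, A i s ^2) * (∑ j, ∑ s, B s j ^2) := by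
        rw [← Fintype.sum_mul_sum]
    _ = (frob A)^2 * (frob B)^2 := by
        rw [sq_frob, sq_frob]
        congr 1
        exact Finset.sum_comm ..
  nlinarith [frob_nonneg A, frob_nonneg B]

lemma frob_eq_sqrt_sq (A : Matrix m k ℝ) : frob A = Real.sqrt (frob A ^ 2) :=
  (Real.sqrt_sq (frob_nonneg A)).symm

lemma frob_eq_of_sq_eq {A : Matrix m k ℝ} {B : Matrix l r ℝ} (h : frob A ^ 2 = frob B ^ 2) :
    frob A = frob B := by
  rw [frob_eq_sqrt_sq, h, ← frob_eq_sqrt_sq]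

lemma trace_mul_le_frob (M N : Matrix k k ℝ) : trace (M * N) ≤ frob M * frob N := by
  have h1 : trace (M * N) = ∑ i, ∑ j, M i j * Nᵀ i j := by
    rw [Matrix.trace]
    simp only [Matrix.diag, Matrix.mul_apply, Matrix.transpose_apply]
  rw [h1, ← frob_transpose N]
  exact ip_le M Nᵀ

lemma frob_mul_orth [DecidableEq k] {A : Matrix m k ℝ} {R : Matrix k k ℝ} (h : R * Rᵀ = 1) :
    frob (A * R) = frob A := by
  apply frob_eq_of_sq_eq
  rw [frob_sq_trace, frob_sq_trace, Matrix.transpose_mul]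
  calc trace (Rᵀ * Aᵀ * (A * R)) = trace ((Rᵀ * (Aᵀ * A)) * R) := by rw [Matrix.mul_assoc, Matrix.mul_assoc, Matrix.mul_assoc]
    _ = trace (R * (Rᵀ * (Aᵀ * A))) := (Matrix.trace_mul_comm _ _)
    _ = trace ((R * Rᵀ) * (Aᵀ * A)) := by rw [Matrix.mul_assoc]
    _ = trace (Aᵀ * A) := by rw [h]; simp

lemma frob_orth_mul [DecidableEq k] {A : Matrix k l ℝ} {Q : Matrix k k ℝ} (h : Qᵀ * Q = 1) :
    frob (Q * A) = frob A := by
  apply frob_eq_of_sq_eq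
  rw [frob_sq_trace, frob_sq_trace, Matrix.transpose_mul]
  congr 1
  calc Aᵀ * Qᵀ * (Q * A) = Aᵀ * (Qᵀ * Q) * A := by rw [Matrix.mul_assoc, Matrix.mul_assoc, Matrix.mul_assoc]
    _ = Aᵀ * A := by rw [h]; simp

/-! vector norms -/

def vn {k : Type*} [Fintype k] (v : k → ℝ) : ℝ := Real.sqrt (v ⬝ᵥ v)

lemma dot_self_nonneg (v : k → ℝ) : 0 ≤ v ⬝ᵥ v := by
  unfold dotProduct
  exact Finset.sum_nonneg fun i _ => mul_self_nonneg _

lemma vn_nonneg (v : k → ℝ) : 0 ≤ vn v := Real.sqrt_nonneg _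

lemma vn_sq (v : k → ℝ) : vn v ^ 2 = v ⬝ᵥ v := Real.sq_sqrt (dot_self_nonneg v)

lemma vn_eq_sqrt_sq (v : k → ℝ) : vn v = Real.sqrt (vn v ^ 2) := (Real.sqrt_sq (vn_nonneg v)).symm

lemma vn_zero {v : k → ℝ} (h : vn v = 0) : v = 0 := by
  have h2 : v ⬝ᵥ v = 0 := by
    have := vn_sq v; rw [h] at this; linarith [this.symm]
  funext i
  have hle : v i ^ 2 ≤ 0 := by
    rw [← h2]
    unfold dotProduct
    have : ∀ j, (0:ℝ) ≤ v j * v j := fun j => mul_self_nonneg _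
    calc v i ^2 = v i * v i := sq (v i) ▸ by ring
      _ ≤ ∑ j, v j * v j := Finset.single_le_sum (fun j _ => this j) (Finset.mem_univ i)
  have := sq_nonneg (v i)
  have : v i ^ 2 = 0 := le_antisymm hle this
  simpa using pow_eq_zero_iff (n := 2) (by norm_num) |>.mp this

lemma dot_le_vn (v w : k → ℝ) : v ⬝ᵥ w ≤ vn v * vn w := by
  unfold vn dotProduct
  have h1 : ∀ u : k → ℝ, (∑ j, u j * u j) = ∑ j, u j ^ 2 := by intro u; apply Finset.sum_congr rfl; intros; ring
  rw [h1, h1]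
  exact Real.sum_mul_le_sqrt_mul_sqrt _ _ _

lemma vn_smul (c : ℝ) (v : k → ℝ) : vn (c • v) = |c| * vn v := by
  unfold vn
  rw [smul_dotProduct, dotProduct_smul, smul_eq_mul, smul_eq_mul, ← mul_assoc,
    show c * c * (v ⬝ᵥ v) = c^2 * (v ⬝ᵥ v) by ring, Real.sqrt_mul (sq_nonneg c),
    Real.sqrt_sq_eq_abs]

lemma vn_add_le (v w : k → ℝ) : vn (v + w) ≤ vn v + vn w := by
  apply sq_le_sq' (add_nonneg (vn_nonneg v) (vn_nonneg w))
  have hexp : (v + w) ⬝ᵥ (v + w) = v ⬝ᵥ v + 2 * (v ⬝ᵥ w) + w ⬝ᵥ w := by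
    rw [add_dotProduct, dotProduct_add, dotProduct_add]
    rw [dotProduct_comm w v]; ring
  rw [vn_sq, hexp]
  have := dot_le_vn v w
  nlinarith [vn_sq v, vn_sq w, vn_nonneg v, vn_nonneg w]

lemma vn_mulVec_le (M : Matrix m k ℝ) (v : k → ℝ) : vn (M *ᵥ v) ≤ frob M * vn v := by
  apply sq_le_sq' (mul_nonneg (frob_nonneg M) (vn_nonneg v))
  rw [vn_sq, mul_pow, sq_frob, vn_sq]
  unfold dotProduct Matrix.mulVec
  calc ∑ i, (fun i => ∑ j, M i j * v j) i * (fun i => ∑ j, M i j * v j) i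
      = ∑ i, (∑ j, M i j * v j)^2 := by apply Finset.sum_congr rfl; intros; ring
    _ ≤ ∑ i, (∑ j, M i j ^2) * (∑ j, v j ^2) := by
        apply Finset.sum_le_sum; intro i _
        exact Finset.sum_mul_sq_le_sq_mul_sq _ _ _
    _ = (∑ i, ∑ j, M i j ^2) * (∑ j, v j ^2) := by rw [Finset.sum_mul]
    _ = (∑ i, ∑ j, M i j ^2) * (∑ j, v j * v j) := by
        congr 1; apply Finset.sum_congr rfl; intros; ring


/-! dF and block lemmas -/

lemma dot_sq_le (a b : k → ℝ) : (a ⬝ᵥ b)^2 ≤ (a ⬝ᵥ a) * (b ⬝ᵥ b) := by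
  unfold dotProduct
  have h := Finset.sum_mul_sq_le_sq_mul_sq Finset.univ a b
  have e : ∀ u : k → ℝ, (∑ j, u j * u j) = ∑ j, u j ^ 2 := by
    intro u; apply Finset.sum_congr rfl; intros; ring
  rw [e, e]; exact h

variable {d n : ℕ}

lemma ortho_one : IsOrtho (d := d) 1 := by constructor <;> simp

lemma ortho_mul {Q R : Matrix (Fin d) (Fin d) ℝ} (hQ : IsOrtho Q) (hR : IsOrtho R) :
    IsOrtho (Q * R) := by
  constructor
  · rw [Matrix.transpose_mul]
    calc Rᵀ * Qᵀ * (Q * R) = Rᵀ * (Qᵀ * Q) * R := by rw [Matrix.mul_assoc, Matrix.mul_assoc, Matrix.mul_assoc]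
      _ = 1 := by rw [hQ.1]; simp [hR.1]
  · rw [Matrix.transpose_mul]
    calc Q * R * (Rᵀ * Qᵀ) = Q * (R * Rᵀ) * Qᵀ := by rw [Matrix.mul_assoc, Matrix.mul_assoc, Matrix.mul_assoc]
      _ = 1 := by rw [hR.2]; simp [hQ.2]

lemma ortho_transpose {Q : Matrix (Fin d) (Fin d) ℝ} (hQ : IsOrtho Q) : IsOrtho Qᵀ := by
  constructor
  · rw [Matrix.transpose_transpose]; exact hQ.2
  · rw [Matrix.transpose_transpose]; exact hQ.1

instance orthoNonempty : Nonempty {Q : Matrix (Fin d) (Fin d) ℝ // IsOrtho Q} := ⟨⟨1, ortho_one⟩⟩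

lemma dF_bddBelow (X Y : Matrix (Fin n × Fin d) (Fin d) ℝ) :
    BddBelow (Set.range fun Q : {Q : Matrix (Fin d) (Fin d) ℝ // IsOrtho Q} => frob (X - Y * Q.1)) := by
  refine ⟨0, ?_⟩
  rintro b ⟨Q, rfl⟩
  exact frob_nonneg _

lemma dF_nonneg (X Y : Matrix (Fin n × Fin d) (Fin d) ℝ) : 0 ≤ dF X Y :=
  le_ciInf fun Q => frob_nonneg _

lemma dF_le {X Y : Matrix (Fin n × Fin d) (Fin d) ℝ} {Q : Matrix (Fin d) (Fin d) ℝ}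
    (hQ : IsOrtho Q) : dF X Y ≤ frob (X - Y * Q) :=
  ciInf_le (dF_bddBelow X Y) ⟨Q, hQ⟩

lemma le_dF {X Y : Matrix (Fin n × Fin d) (Fin d) ℝ} {c : ℝ}
    (h : ∀ Q : Matrix (Fin d) (Fin d) ℝ, IsOrtho Q → c ≤ frob (X - Y * Q)) : c ≤ dF X Y :=
  le_ciInf fun Q => h Q.1 Q.2

lemma exists_dF_lt {X Y : Matrix (Fin n × Fin d) (Fin d) ℝ} {c : ℝ} (h : dF X Y < c) :
    ∃ Q : Matrix (Fin d) (Fin d) ℝ, IsOrtho Q ∧ frob (X - Y * Q) < c := by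
  obtain ⟨Q, hQ⟩ := exists_lt_of_ciInf_lt h
  exact ⟨Q.1, Q.2, hQ⟩

lemma blockOrtho_mul_self {X : Matrix (Fin n × Fin d) (Fin d) ℝ} (hX : BlockOrtho X) :
    Xᵀ * X = (n : ℝ) • (1 : Matrix (Fin d) (Fin d) ℝ) := by
  ext a b
  rw [Matrix.mul_apply]
  rw [show (Finset.univ : Finset (Fin n × Fin d)) = Finset.univ ×ˢ Finset.univ by rfl]
  rw [Finset.sum_product]
  have : ∀ i : Fin n, ∑ c : Fin d, Xᵀ a (i, c) * X (i, c) b = (1 : Matrix (Fin d) (Fin d) ℝ) a b := by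
    intro i
    have h := (hX i).1
    calc ∑ c : Fin d, Xᵀ a (i, c) * X (i, c) b = ((blk X i)ᵀ * blk X i) a b := by
          rw [Matrix.mul_apply]
          apply Finset.sum_congr rfl; intro c _
          simp [blk, Matrix.transpose_apply]
      _ = (1 : Matrix (Fin d) (Fin d) ℝ) a b := by rw [h]
  rw [Finset.sum_congr rfl fun i _ => this i]
  simp [Matrix.smul_apply]

lemma dot_mulVec_self {X : Matrix (Fin n × Fin d) (Fin d) ℝ}
    (hX : Xᵀ * X = (n : ℝ) • (1 : Matrix (Fin d) (Fin d) ℝ)) (u : Fin d → ℝ) :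
    (X *ᵥ u) ⬝ᵥ (X *ᵥ u) = n * (u ⬝ᵥ u) := by
  rw [Matrix.dotProduct_mulVec, ← Matrix.mulVec_transpose, Matrix.mulVec_mulVec, hX]
  rw [Matrix.smul_mulVec, Matrix.one_mulVec, smul_dotProduct]
  simp

lemma dot_transpose_le {X : Matrix (Fin n × Fin d) (Fin d) ℝ}
    (hX : Xᵀ * X = (n : ℝ) • (1 : Matrix (Fin d) (Fin d) ℝ)) (v : Fin n × Fin d → ℝ) :
    (Xᵀ *ᵥ v) ⬝ᵥ (Xᵀ *ᵥ v) ≤ n * (v ⬝ᵥ v) := by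
  set u := Xᵀ *ᵥ v with hu
  have key : (u ⬝ᵥ u)^2 ≤ (n * (u ⬝ᵥ u)) * (v ⬝ᵥ v) := by
    have h1 : u ⬝ᵥ u = (X *ᵥ u) ⬝ᵥ v := by
      rw [hu, Matrix.dotProduct_mulVec, ← Matrix.mulVec_transpose, Matrix.transpose_transpose]
    calc (u ⬝ᵥ u)^2 = ((X *ᵥ u) ⬝ᵥ v)^2 := by rw [h1]
      _ ≤ ((X *ᵥ u) ⬝ᵥ (X *ᵥ u)) * (v ⬝ᵥ v) := dot_sq_le _ _
      _ = (n * (u ⬝ᵥ u)) * (v ⬝ᵥ v) := by rw [dot_mulVec_self hX]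
  rcases eq_or_lt_of_le (dot_self_nonneg u) with h0 | hpos
  · rw [← h0]
    exact mul_nonneg (Nat.cast_nonneg n) (dot_self_nonneg v)
  · nlinarith [dot_self_nonneg v]


/-! sqrt machinery -/

lemma psdSqrt_mul_self {M : Matrix (Fin d) (Fin d) ℝ} (hM : M.PosSemidef) :
    psdSqrt hM * psdSqrt hM = M := by
  set U := (hM.1.eigenvectorUnitary : Matrix (Fin d) (Fin d) ℝ) with hU
  have hUU : star U * U = 1 := Matrix.mem_unitaryGroup_iff'.mp hM.1.eigenvectorUnitary.2
  set D : Matrix (Fin d) (Fin d) ℝ := diagonal ((↑) ∘ (Real.sqrt ∘ hM.1.eigenvalues)) with hDdef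
  have hD : D * D = diagonal (RCLike.ofReal ∘ hM.1.eigenvalues) := by
    rw [hDdef, diagonal_mul_diagonal]
    congr 1
    funext i
    simp [Real.mul_self_sqrt (hM.eigenvalues_nonneg i)]
  have hs := hM.1.spectral_theorem
  rw [Unitary.conjStarAlgAut_apply] at hs
  unfold psdSqrt
  calc U * D * star U * (U * D * star U) = U * D * (star U * U) * D * star U := by
        simp only [Matrix.mul_assoc]
    _ = U * (D * D) * star U := by rw [hUU, Matrix.mul_one, Matrix.mul_assoc U D D]
    _ = M := by rw [hD]; exact hs.symm

lemma posSemidef_psdSqrt {M : Matrix (Fin d) (Fin d) ℝ} (hM : M.PosSemidef) :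
    (psdSqrt hM).PosSemidef := by
  have h1 : (diagonal (fun i => Real.sqrt (hM.1.eigenvalues i))).PosSemidef :=
    Matrix.posSemidef_diagonal_iff.mpr (fun i => Real.sqrt_nonneg _)
  have h2 := h1.mul_mul_conjTranspose_same (hM.1.eigenvectorUnitary : Matrix (Fin d) (Fin d) ℝ)
  unfold psdSqrt
  rw [Matrix.star_eq_conjTranspose]
  exact h2

lemma psd_AtA (A : Matrix (Fin d) (Fin d) ℝ) : (Aᵀ * A).PosSemidef := by
  have := Matrix.posSemidef_conjTranspose_mul_self A
  rwa [Matrix.conjTranspose_eq_transpose_of_trivial] at this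

lemma msgn_eq (A : Matrix (Fin d) (Fin d) ℝ) : msgn A = A * (psdSqrt (psd_AtA A))⁻¹ := by
  unfold msgn
  rw [dif_pos (psd_AtA A)]

lemma sqrt_mul_self' (A : Matrix (Fin d) (Fin d) ℝ) :
    psdSqrt (psd_AtA A) * psdSqrt (psd_AtA A) = Aᵀ * A := psdSqrt_mul_self (psd_AtA A)

lemma sqrt_transpose (A : Matrix (Fin d) (Fin d) ℝ) :
    (psdSqrt (psd_AtA A))ᵀ = psdSqrt (psd_AtA A) := by
  have h := (posSemidef_psdSqrt (psd_AtA A)).1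
  rwa [Matrix.IsHermitian, Matrix.conjTranspose_eq_transpose_of_trivial] at h

lemma sqrt_det_isUnit {A : Matrix (Fin d) (Fin d) ℝ} (hA : IsUnit A.det) :
    IsUnit (psdSqrt (psd_AtA A)).det := by
  have h : (psdSqrt (psd_AtA A)).det * (psdSqrt (psd_AtA A)).det = Aᵀ.det * A.det := by
    rw [← Matrix.det_mul, sqrt_mul_self', Matrix.det_mul]
  rw [Matrix.det_transpose] at h
  rw [isUnit_iff_ne_zero]
  intro h0
  rw [h0, mul_zero] at h
  exact (isUnit_iff_ne_zero.mp (hA.mul hA)) h.symm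

lemma msgn_ortho {A : Matrix (Fin d) (Fin d) ℝ} (hA : IsUnit A.det) : IsOrtho (msgn A) := by
  set P := psdSqrt (psd_AtA A) with hP
  have hdet := sqrt_det_isUnit hA
  have h1 : (msgn A)ᵀ * msgn A = 1 := by
    rw [msgn_eq, Matrix.transpose_mul, Matrix.transpose_nonsing_inv, sqrt_transpose]
    calc P⁻¹ * Aᵀ * (A * P⁻¹) = P⁻¹ * (Aᵀ * A) * P⁻¹ := by
          rw [Matrix.mul_assoc, Matrix.mul_assoc, Matrix.mul_assoc]
      _ = P⁻¹ * (P * P) * P⁻¹ := by rw [sqrt_mul_self']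
      _ = (P⁻¹ * P) * (P * P⁻¹) := by rw [Matrix.mul_assoc, Matrix.mul_assoc, Matrix.mul_assoc]
      _ = 1 := by rw [Matrix.nonsing_inv_mul _ hdet, Matrix.mul_nonsing_inv _ hdet, Matrix.one_mul]
  exact ⟨h1, mul_eq_one_comm.mp h1⟩

lemma msgn_mul_sqrt {A : Matrix (Fin d) (Fin d) ℝ} (hA : IsUnit A.det) :
    msgn A * psdSqrt (psd_AtA A) = A := by
  rw [msgn_eq, Matrix.mul_assoc, Matrix.nonsing_inv_mul _ (sqrt_det_isUnit hA), Matrix.mul_one]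

lemma msgn_transpose_mul {A : Matrix (Fin d) (Fin d) ℝ} (hA : IsUnit A.det) :
    (msgn A)ᵀ * A = psdSqrt (psd_AtA A) := by
  set P := psdSqrt (psd_AtA A) with hP
  rw [msgn_eq, Matrix.transpose_mul, Matrix.transpose_nonsing_inv, sqrt_transpose]
  calc P⁻¹ * Aᵀ * A = P⁻¹ * (P * P) := by rw [Matrix.mul_assoc, sqrt_mul_self']
    _ = (P⁻¹ * P) * P := by rw [Matrix.mul_assoc]
    _ = P := by rw [Matrix.nonsing_inv_mul _ (sqrt_det_isUnit hA), Matrix.one_mul]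

/-! spectral facts -/

lemma star_coe_unitary {B : Matrix (Fin d) (Fin d) ℝ} (hB : B.IsHermitian) :
    star (hB.eigenvectorUnitary : Matrix (Fin d) (Fin d) ℝ) *
      (hB.eigenvectorUnitary : Matrix (Fin d) (Fin d) ℝ) = 1 :=
  Matrix.mem_unitaryGroup_iff'.mp hB.eigenvectorUnitary.2

lemma coe_unitary_star {B : Matrix (Fin d) (Fin d) ℝ} (hB : B.IsHermitian) :
    (hB.eigenvectorUnitary : Matrix (Fin d) (Fin d) ℝ) *
      star (hB.eigenvectorUnitary : Matrix (Fin d) (Fin d) ℝ) = 1 :=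
  Matrix.mem_unitaryGroup_iff.mp hB.eigenvectorUnitary.2

lemma trace_eq_sum_eig {B : Matrix (Fin d) (Fin d) ℝ} (hB : B.IsHermitian) :
    Matrix.trace B = ∑ i, hB.eigenvalues i := by
  conv_lhs => rw [hB.spectral_theorem, Unitary.conjStarAlgAut_apply]
  rw [Matrix.trace_mul_cycle, star_coe_unitary hB, Matrix.one_mul, Matrix.trace_diagonal]
  simp [RCLike.ofReal]

lemma frob_diagonal (v : Fin d → ℝ) : frob (Matrix.diagonal v) = Real.sqrt (∑ i, v i ^ 2) := by
  rw [frob]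
  congr 1
  apply Finset.sum_congr rfl; intro i _
  rw [Finset.sum_eq_single i]
  · simp [Matrix.diagonal]
  · intro b _ hb; simp [Matrix.diagonal_apply_ne' _ hb]
  · intro h; exact absurd (Finset.mem_univ i) h

lemma frob_sub_smul_one {B : Matrix (Fin d) (Fin d) ℝ} (hB : B.IsHermitian) (c : ℝ) :
    frob (B - c • 1) = Real.sqrt (∑ i, (hB.eigenvalues i - c) ^ 2) := by
  set U := (hB.eigenvectorUnitary : Matrix (Fin d) (Fin d) ℝ) with hU
  have hsU : star U = Uᵀ := by
    rw [Matrix.star_eq_conjTranspose, Matrix.conjTranspose_eq_transpose_of_trivial]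
  have h1 : U ᵀ * U = 1 := by rw [← hsU]; exact star_coe_unitary hB
  have h2 : U * Uᵀ = 1 := by rw [← hsU]; exact coe_unitary_star hB
  have hdiag : B - c • 1 = U * (Matrix.diagonal (fun i => hB.eigenvalues i - c)) * Uᵀ := by
    have hc : c • (1 : Matrix (Fin d) (Fin d) ℝ) = U * (c • 1) * Uᵀ := by
      rw [Matrix.mul_smul, Matrix.mul_one, Matrix.smul_mul, h2]
    have hd : Matrix.diagonal (fun i => hB.eigenvalues i - c)
        = Matrix.diagonal (RCLike.ofReal ∘ hB.eigenvalues) - c • 1 := by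
      ext i j
      rcases eq_or_ne i j with rfl | h
      · simp [RCLike.ofReal, Matrix.one_apply]
      · simp [Matrix.diagonal_apply_ne _ h, Matrix.one_apply_ne h]
    rw [hd, Matrix.mul_sub, Matrix.sub_mul]
    have := hB.spectral_theorem
    rw [Unitary.conjStarAlgAut_apply, hsU] at this
    rw [← this, ← hc]
  rw [hdiag, Matrix.mul_assoc, frob_orth_mul h1,
    frob_mul_orth (by rw [Matrix.transpose_transpose]; exact h1)]
  exact frob_diagonal _


/-! eigenvalue bounds and trace inequalities -/

lemma eigenvalues_nonneg' (A : Matrix (Fin d) (Fin d) ℝ) (i : Fin d) :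
    0 ≤ (posSemidef_psdSqrt (psd_AtA A)).1.eigenvalues i :=
  (posSemidef_psdSqrt (psd_AtA A)).eigenvalues_nonneg i

lemma eig_le {A : Matrix (Fin d) (Fin d) ℝ} {c : ℝ} (hc : 0 ≤ c)
    (hop : ∀ v : Fin d → ℝ, ((A *ᵥ v) ⬝ᵥ (A *ᵥ v)) ≤ c^2 * (v ⬝ᵥ v)) (i : Fin d) :
    (posSemidef_psdSqrt (psd_AtA A)).1.eigenvalues i ≤ c := by
  set P := psdSqrt (psd_AtA A) with hP
  set hPh := (posSemidef_psdSqrt (psd_AtA A)).1 with hPhdef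
  set μ := hPh.eigenvalues i with hμ
  set v : Fin d → ℝ := ⇑(hPh.eigenvectorBasis i) with hv
  have hveq : P *ᵥ v = μ • v := hPh.mulVec_eigenvectorBasis i
  have hvv : v ⬝ᵥ v = 1 := by
    have hnorm : ‖hPh.eigenvectorBasis i‖ = 1 := hPh.eigenvectorBasis.orthonormal.1 i
    have : ‖hPh.eigenvectorBasis i‖ ^ 2 = ∑ j, v j ^ 2 := by
      rw [EuclideanSpace.norm_eq, Real.sq_sqrt (Finset.sum_nonneg fun j _ => sq_nonneg _)]
      apply Finset.sum_congr rfl; intro j _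
      rw [Real.norm_eq_abs, sq_abs]
    rw [hnorm, one_pow] at this
    unfold dotProduct
    rw [show (∑ j, v j * v j) = ∑ j, v j ^2 from Finset.sum_congr rfl fun j _ => by ring, ← this]
  have hAAv : (Aᵀ * A) *ᵥ v = (μ^2) • v := by
    rw [← sqrt_mul_self', ← Matrix.mulVec_mulVec, hveq, Matrix.mulVec_smul, hveq, smul_smul, sq]
  have hAvAv : (A *ᵥ v) ⬝ᵥ (A *ᵥ v) = μ^2 := by
    rw [Matrix.dotProduct_mulVec, ← Matrix.mulVec_transpose, Matrix.mulVec_mulVec, hAAv]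
    rw [smul_dotProduct, hvv, smul_eq_mul, mul_one]
  have hb := hop v
  rw [hAvAv, hvv, mul_one] at hb
  have hμ0 : 0 ≤ μ := eigenvalues_nonneg' A i
  nlinarith

lemma trace_RP_le (S R : Matrix (Fin d) (Fin d) ℝ) (hSsym : Sᵀ = S) (hR : R * Rᵀ = 1) :
    Matrix.trace (R * (S * S)) ≤ Matrix.trace (S * S) := by
  rw [← Matrix.mul_assoc, Matrix.trace_mul_cycle]
  calc Matrix.trace ((S * R) * S) ≤ frob (S * R) * frob S := trace_mul_le_frob _ _
    _ = frob S * frob S := by rw [frob_mul_orth hR]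
    _ = frob S ^ 2 := (sq (frob S)).symm
    _ = Matrix.trace (Sᵀ * S) := frob_sq_trace S
    _ = Matrix.trace (S * S) := by rw [hSsym]

lemma psd_symm_sqrt {P : Matrix (Fin d) (Fin d) ℝ} (hPpsd : P.PosSemidef) :
    ∃ S : Matrix (Fin d) (Fin d) ℝ, S * S = P ∧ Sᵀ = S := by
  refine ⟨psdSqrt hPpsd, psdSqrt_mul_self hPpsd, ?_⟩
  have h := (posSemidef_psdSqrt hPpsd).1
  rwa [Matrix.IsHermitian, Matrix.conjTranspose_eq_transpose_of_trivial] at h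

lemma trace_orth_mul_le {A : Matrix (Fin d) (Fin d) ℝ} (hA : IsUnit A.det)
    {Q' : Matrix (Fin d) (Fin d) ℝ} (hQ' : IsOrtho Q') :
    Matrix.trace (Q'ᵀ * A) ≤ Matrix.trace (psdSqrt (psd_AtA A)) := by
  obtain ⟨S, hSS, hSsym⟩ := psd_symm_sqrt (posSemidef_psdSqrt (psd_AtA A))
  have hRortho : IsOrtho (Q'ᵀ * msgn A) := ortho_mul (ortho_transpose hQ') (msgn_ortho hA)
  have h1 : Q'ᵀ * A = (Q'ᵀ * msgn A) * psdSqrt (psd_AtA A) := by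
    rw [Matrix.mul_assoc, msgn_mul_sqrt hA]
  rw [h1, ← hSS]
  exact trace_RP_le S _ hSsym hRortho.2

lemma trace_n_one : Matrix.trace ((n : ℝ) • (1 : Matrix (Fin d) (Fin d) ℝ)) = (n : ℝ) * d := by
  rw [Matrix.trace_smul, Matrix.trace_one]
  simp

lemma frob_diff_sq {X Y : Matrix (Fin n × Fin d) (Fin d) ℝ}
    (hXX : Xᵀ * X = (n : ℝ) • (1 : Matrix (Fin d) (Fin d) ℝ))
    (hYY : Yᵀ * Y = (n : ℝ) • (1 : Matrix (Fin d) (Fin d) ℝ))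
    {Q' : Matrix (Fin d) (Fin d) ℝ} (hQ' : IsOrtho Q') :
    frob (X - Y * Q') ^ 2 = 2*((n:ℝ)*d) - 2 * Matrix.trace (Q'ᵀ * (Yᵀ * X)) := by
  rw [frob_sq_trace]
  have hexp : (X - Y * Q')ᵀ * (X - Y * Q')
      = Xᵀ*X - Xᵀ*(Y*Q') - Q'ᵀ*(Yᵀ*X) + Q'ᵀ*(Yᵀ*(Y*Q')) := by
    rw [Matrix.transpose_sub, Matrix.transpose_mul]
    simp only [Matrix.sub_mul, Matrix.mul_sub, Matrix.mul_assoc]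
    abel
  rw [hexp]
  rw [Matrix.trace_add, Matrix.trace_sub, Matrix.trace_sub]
  have h1 : Matrix.trace (Xᵀ*X) = (n:ℝ) * d := by rw [hXX, trace_n_one]
  have h2 : Matrix.trace (Q'ᵀ*(Yᵀ*(Y*Q'))) = (n:ℝ) * d := by
    rw [← Matrix.mul_assoc Yᵀ Y Q', hYY, Matrix.smul_mul, Matrix.one_mul, Matrix.mul_smul,
      hQ'.1, trace_n_one]
  have h3 : Matrix.trace (Xᵀ*(Y*Q')) = Matrix.trace (Q'ᵀ*(Yᵀ*X)) := by
    rw [← Matrix.trace_transpose (Q'ᵀ*(Yᵀ*X))]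
    congr 1
    rw [Matrix.transpose_mul, Matrix.transpose_mul, Matrix.transpose_transpose,
      Matrix.transpose_transpose, Matrix.mul_assoc]
  rw [h1, h2, h3]
  ring


/-! lower bounds for singular values -/

lemma mulVec_dot (M : Matrix m k ℝ) (w : k → ℝ) (b : m → ℝ) :
    (M *ᵥ w) ⬝ᵥ b = w ⬝ᵥ (Mᵀ *ᵥ b) := by
  rw [dotProduct_comm, Matrix.dotProduct_mulVec, ← Matrix.mulVec_transpose,
    dotProduct_comm]

lemma frob_sub_comm (A B : Matrix m k ℝ) : frob (A - B) = frob (B - A) := by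
  unfold frob
  congr 1
  apply Finset.sum_congr rfl; intro i _
  apply Finset.sum_congr rfl; intro j _
  rw [Matrix.sub_apply, Matrix.sub_apply]
  ring

lemma dot_orth {R : Matrix (Fin d) (Fin d) ℝ} (hR : Rᵀ * R = 1) (t : Fin d → ℝ) :
    (R *ᵥ t) ⬝ᵥ (R *ᵥ t) = t ⬝ᵥ t := by
  rw [mulVec_dot, Matrix.mulVec_mulVec, hR, Matrix.one_mulVec]

lemma lower_bound {W V : Matrix (Fin n × Fin d) (Fin d) ℝ}
    (hWW : Wᵀ * W = (n:ℝ) • (1 : Matrix (Fin d) (Fin d) ℝ))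
    (hVV : Vᵀ * V = (n:ℝ) • (1 : Matrix (Fin d) (Fin d) ℝ))
    {R : Matrix (Fin d) (Fin d) ℝ} (hR : IsOrtho R) (t : Fin d → ℝ) :
    ((n:ℝ) - frob (W * R - V)^2/2) * vn t ≤ vn ((Wᵀ * V) *ᵥ t) := by
  set e := frob (W * R - V) with he
  have hWR : (W*R)ᵀ * (W*R) = (n:ℝ) • (1 : Matrix (Fin d) (Fin d) ℝ) := by
    rw [Matrix.transpose_mul, Matrix.mul_assoc, ← Matrix.mul_assoc Wᵀ, hWW, Matrix.smul_mul,
      Matrix.one_mul, Matrix.mul_smul, hR.1]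
  set a := (W*R) *ᵥ t with ha
  set b := V *ᵥ t with hb
  have haa : a ⬝ᵥ a = n * (t ⬝ᵥ t) := dot_mulVec_self hWR t
  have hbb : b ⬝ᵥ b = n * (t ⬝ᵥ t) := dot_mulVec_self hVV t
  have habdiff : a - b = (W * R - V) *ᵥ t := by rw [ha, hb, Matrix.sub_mulVec]
  have hdiff : (a - b) ⬝ᵥ (a - b) ≤ e^2 * (t ⬝ᵥ t) := by
    rw [habdiff]
    have h := vn_mulVec_le (W * R - V) t
    have h2 := vn_sq ((W * R - V) *ᵥ t)
    nlinarith [vn_nonneg ((W * R - V) *ᵥ t), vn_nonneg t, frob_nonneg (W * R - V), vn_sq t]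
  have hexp : (a - b) ⬝ᵥ (a - b) = a ⬝ᵥ a - 2*(a ⬝ᵥ b) + b ⬝ᵥ b := by
    rw [sub_dotProduct, dotProduct_sub, dotProduct_sub,
      dotProduct_comm b a]
    ring
  have hinner : a ⬝ᵥ b = (R *ᵥ t) ⬝ᵥ ((Wᵀ * V) *ᵥ t) := by
    rw [ha, hb, ← Matrix.mulVec_mulVec, mulVec_dot, Matrix.mulVec_mulVec]
  have hRt : vn (R *ᵥ t) = vn t := by
    unfold vn; rw [dot_orth hR.1]
  have key : ((n:ℝ) - e^2/2) * (t ⬝ᵥ t) ≤ a ⬝ᵥ b := by nlinarith [hdiff, hexp, haa, hbb]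
  have hcs : a ⬝ᵥ b ≤ vn t * vn ((Wᵀ * V) *ᵥ t) := by
    rw [hinner, ← hRt]
    exact dot_le_vn _ _
  rcases eq_or_lt_of_le (vn_nonneg t) with h0 | hpos
  · rw [← h0, mul_zero]
    exact vn_nonneg _
  · have htt : t ⬝ᵥ t = vn t * vn t := by rw [← vn_sq]; ring
    rw [htt] at key
    have hfin : (((n:ℝ) - e^2/2) * vn t) * vn t ≤ (vn ((Wᵀ * V) *ᵥ t)) * vn t := by
      calc (((n:ℝ) - e^2/2) * vn t) * vn t = ((n:ℝ) - e^2/2) * (vn t * vn t) := by ring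
        _ ≤ a ⬝ᵥ b := key
        _ ≤ vn t * vn ((Wᵀ * V) *ᵥ t) := hcs
        _ = (vn ((Wᵀ * V) *ᵥ t)) * vn t := by ring
    exact le_of_mul_le_mul_right hfin hpos


lemma vn_neg (w : k → ℝ) : vn (-w) = vn w := by
  unfold vn
  rw [neg_dotProduct, dotProduct_neg, neg_neg]

lemma vn_rev_triangle (T G : k → ℝ) : vn T - vn G ≤ vn (T + G) := by
  have h : T = (T + G) + (-G) := by abel
  have h2 : vn T ≤ vn (T + G) + vn (-G) := by
    conv_lhs => rw [h]
    exact vn_add_le _ _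
  rw [vn_neg] at h2
  linarith

lemma key_invertible {d n : ℕ} (hn : 1 ≤ n) {Z X Y : Matrix (Fin n × Fin d) (Fin d) ℝ}
    (hZZ : Zᵀ * Z = (n:ℝ) • (1 : Matrix (Fin d) (Fin d) ℝ))
    (hXX : Xᵀ * X = (n:ℝ) • (1 : Matrix (Fin d) (Fin d) ℝ))
    (hYY : Yᵀ * Y = (n:ℝ) • (1 : Matrix (Fin d) (Fin d) ℝ))
    {Q₁ Q₂ : Matrix (Fin d) (Fin d) ℝ} (hQ₁ : IsOrtho Q₁) (hQ₂ : IsOrtho Q₂)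
    (he₁ : frob (X - Z*Q₁) ≤ (72/100)*Real.sqrt n)
    (he₂ : frob (Y - Z*Q₂) ≤ (72/100)*Real.sqrt n) :
    IsUnit (Yᵀ * X).det := by
  rw [← Matrix.isUnit_iff_isUnit_det, ← Matrix.mulVec_injective_iff_isUnit]
  set e₁ := frob (X - Z*Q₁) with he₁def
  set e₂ := frob (Y - Z*Q₂) with he₂def
  have hs : Real.sqrt n * Real.sqrt n = n := Real.mul_self_sqrt (Nat.cast_nonneg n)
  have hn1 : (1:ℝ) ≤ n := by exact_mod_cast hn
  have hnne : (n:ℝ) ≠ 0 := by linarith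
  have he₁0 : 0 ≤ e₁ := frob_nonneg _
  have he₂0 : 0 ≤ e₂ := frob_nonneg _
  have he₁sq : e₁^2 ≤ (5184/10000) * n := by nlinarith [Real.sqrt_nonneg (n:ℝ)]
  have he₂sq : e₂^2 ≤ (5184/10000) * n := by nlinarith [Real.sqrt_nonneg (n:ℝ)]
  have hest : ∀ v : Fin d → ℝ, ((n:ℝ)/33) * vn v ≤ vn ((Yᵀ*X) *ᵥ v) := by
    intro v
    have hc1 : ((n:ℝ) - e₁^2/2) * vn v ≤ vn ((Zᵀ*X) *ᵥ v) := by
      have h := lower_bound hZZ hXX hQ₁ v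
      rwa [frob_sub_comm, ← he₁def] at h
    have hc2 : ∀ t, ((n:ℝ) - e₂^2/2) * vn t ≤ vn ((Yᵀ*Z) *ᵥ t) := by
      intro t
      have h := lower_bound hYY hZZ (ortho_transpose hQ₂) t
      have heq : frob (Y*Q₂ᵀ - Z) = e₂ := by
        rw [← frob_mul_orth (A := Y*Q₂ᵀ - Z) hQ₂.2, Matrix.sub_mul, Matrix.mul_assoc, hQ₂.1,
          Matrix.mul_one]
      rwa [heq] at h
    set M : Matrix (Fin n × Fin d) (Fin n × Fin d) ℝ := 1 - (n:ℝ)⁻¹ • (Z*Zᵀ) with hM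
    set E := X - Z*Q₁ with hE
    set F := Y - Z*Q₂ with hF
    have hZZt : Zᵀ * (Z * Zᵀ) = (n:ℝ) • Zᵀ := by
      rw [← Matrix.mul_assoc, hZZ, Matrix.smul_mul, Matrix.one_mul]
    have hZtM : Zᵀ * M = 0 := by
      rw [hM, Matrix.mul_sub, Matrix.mul_one, Matrix.mul_smul, hZZt, smul_smul,
        inv_mul_cancel₀ hnne, one_smul, sub_self]
    have hMZ : M * Z = 0 := by
      have hZZt2 : (Z * Zᵀ) * Z = (n:ℝ) • Z := by
        rw [Matrix.mul_assoc, hZZ, Matrix.mul_smul, Matrix.mul_one]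
      rw [hM, Matrix.sub_mul, Matrix.one_mul, Matrix.smul_mul, hZZt2, smul_smul,
        inv_mul_cancel₀ hnne, one_smul, sub_self]
    have hz : (Q₂ᵀ*Zᵀ) * (M*E) = 0 := by
      rw [Matrix.mul_assoc, ← Matrix.mul_assoc Zᵀ, hZtM, Matrix.zero_mul, Matrix.mul_zero]
    have h1 : Fᵀ * (M * E) = Yᵀ * (M * E) := by
      rw [hF, Matrix.transpose_sub, Matrix.sub_mul, Matrix.transpose_mul, hz, sub_zero]
    have hz2 : M * (Z*Q₁) = 0 := by rw [← Matrix.mul_assoc, hMZ, Matrix.zero_mul]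
    have h2 : M * E = M * X := by rw [hE, Matrix.mul_sub, hz2, sub_zero]
    have h3 : Yᵀ * (M * X) = Yᵀ*X - (n:ℝ)⁻¹ • ((Yᵀ*Z) * (Zᵀ*X)) := by
      rw [hM, Matrix.sub_mul, Matrix.one_mul, Matrix.smul_mul, Matrix.mul_sub, Matrix.mul_smul]
      congr 2
      rw [Matrix.mul_assoc Z Zᵀ X, ← Matrix.mul_assoc Yᵀ Z (Zᵀ*X), ← Matrix.mul_assoc]
    have hdecomp : Yᵀ * X = (n:ℝ)⁻¹ • ((Yᵀ*Z) * (Zᵀ*X)) + Fᵀ * (M * E) := by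
      rw [h1, h2, h3]; abel
    have hv1 : (Yᵀ*X) *ᵥ v
        = (n:ℝ)⁻¹ • ((Yᵀ*Z) *ᵥ ((Zᵀ*X) *ᵥ v)) + Fᵀ *ᵥ (M *ᵥ (E *ᵥ v)) := by
      rw [hdecomp, Matrix.add_mulVec, Matrix.smul_mulVec]
      simp only [← Matrix.mulVec_mulVec]
    have hMcontr : ∀ w, vn (M *ᵥ w) ≤ vn w := by
      intro w
      apply sq_le_sq' (vn_nonneg w)
      rw [vn_sq, vn_sq]
      have hMw : M *ᵥ w = w - (n:ℝ)⁻¹ • (Z *ᵥ (Zᵀ *ᵥ w)) := by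
        rw [hM, Matrix.sub_mulVec, Matrix.one_mulVec, Matrix.smul_mulVec,
          ← Matrix.mulVec_mulVec]
      set p := Zᵀ *ᵥ w with hp
      have hZpw : w ⬝ᵥ (Z *ᵥ p) = p ⬝ᵥ p := by
        rw [dotProduct_comm, mulVec_dot, dotProduct_comm, hp]
      have hZpZp : (Z *ᵥ p) ⬝ᵥ (Z *ᵥ p) = n * (p ⬝ᵥ p) := dot_mulVec_self hZZ p
      have hexp : (M *ᵥ w) ⬝ᵥ (M *ᵥ w)
          = w ⬝ᵥ w - 2*(n:ℝ)⁻¹ * (w ⬝ᵥ (Z *ᵥ p)) + (n:ℝ)⁻¹^2 * ((Z *ᵥ p) ⬝ᵥ (Z *ᵥ p)) := by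
        rw [hMw]
        simp only [sub_dotProduct, dotProduct_sub, smul_dotProduct,
          dotProduct_smul, smul_eq_mul, dotProduct_comm (Z *ᵥ p) w]
        ring
      rw [hexp, hZpw, hZpZp]
      have hpp : 0 ≤ p ⬝ᵥ p := dot_self_nonneg p
      have : (n:ℝ)⁻¹^2 * (n * (p ⬝ᵥ p)) = (n:ℝ)⁻¹ * (p ⬝ᵥ p) := by
        field_simp
      rw [this]
      have hninv : 0 ≤ (n:ℝ)⁻¹ := by positivity
      nlinarith
    have hGv : vn (Fᵀ *ᵥ (M *ᵥ (E *ᵥ v))) ≤ e₂ * (e₁ * vn v) := by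
      calc vn (Fᵀ *ᵥ (M *ᵥ (E *ᵥ v))) ≤ frob Fᵀ * vn (M *ᵥ (E *ᵥ v)) := vn_mulVec_le _ _
        _ ≤ frob Fᵀ * vn (E *ᵥ v) := by
            apply mul_le_mul_of_nonneg_left (hMcontr _) (frob_nonneg _)
        _ = e₂ * vn (E *ᵥ v) := by rw [frob_transpose]
        _ ≤ e₂ * (e₁ * vn v) := by
            apply mul_le_mul_of_nonneg_left (vn_mulVec_le _ _) he₂0
    have ha₂ : (7408/10000:ℝ) * n ≤ (n:ℝ) - e₂^2/2 := by linarith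
    have ha₁ : (7408/10000:ℝ) * n ≤ (n:ℝ) - e₁^2/2 := by linarith
    have hT : ((7408/10000:ℝ)*n) * (((7408/10000:ℝ)*n) * vn v)
        ≤ vn ((Yᵀ*Z) *ᵥ ((Zᵀ*X) *ᵥ v)) := by
      have step1 : ((7408/10000:ℝ)*n) * vn v ≤ vn ((Zᵀ*X) *ᵥ v) :=
        le_trans (mul_le_mul_of_nonneg_right ha₁ (vn_nonneg v)) hc1
      have step2 := hc2 ((Zᵀ*X) *ᵥ v)
      have step3 : ((7408/10000:ℝ)*n) * (((7408/10000:ℝ)*n) * vn v)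
          ≤ ((n:ℝ) - e₂^2/2) * vn ((Zᵀ*X) *ᵥ v) := by
        apply mul_le_mul ha₂ step1 (mul_nonneg (by positivity) (vn_nonneg v)) (by linarith)
      exact le_trans step3 step2
    have hvnT : vn ((n:ℝ)⁻¹ • ((Yᵀ*Z) *ᵥ ((Zᵀ*X) *ᵥ v)))
        = (n:ℝ)⁻¹ * vn ((Yᵀ*Z) *ᵥ ((Zᵀ*X) *ᵥ v)) := by
      rw [vn_smul, abs_of_pos (by positivity)]
    have htri := vn_rev_triangle ((n:ℝ)⁻¹ • ((Yᵀ*Z) *ᵥ ((Zᵀ*X) *ᵥ v)))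
      (Fᵀ *ᵥ (M *ᵥ (E *ᵥ v)))
    rw [← hv1] at htri
    have hTlow : (7408/10000:ℝ)^2 * (n * vn v) ≤ vn ((n:ℝ)⁻¹ • ((Yᵀ*Z) *ᵥ ((Zᵀ*X) *ᵥ v))) := by
      rw [hvnT]
      have hmono := mul_le_mul_of_nonneg_left hT (by positivity : (0:ℝ) ≤ (n:ℝ)⁻¹)
      have heq : (n:ℝ)⁻¹ * (((7408/10000:ℝ)*n) * (((7408/10000:ℝ)*n) * vn v))
          = (7408/10000:ℝ)^2 * (n * vn v) := by
        field_simp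
      linarith [hmono, heq ▸ hmono]
    have hGlow : e₂ * (e₁ * vn v) ≤ (5184/10000:ℝ) * (n * vn v) := by
      have h12 : e₂ * e₁ ≤ ((72/100)*Real.sqrt n) * ((72/100)*Real.sqrt n) := by
        apply mul_le_mul he₂ he₁ he₁0 (by positivity)
      have h13 : ((72/100:ℝ)*Real.sqrt n) * ((72/100)*Real.sqrt n) = (5184/10000) * n := by
        rw [show ((72/100:ℝ)*Real.sqrt n) * ((72/100)*Real.sqrt n)
          = (72/100)*(72/100)*(Real.sqrt n * Real.sqrt n) by ring, hs]
        norm_num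
      nlinarith [vn_nonneg v, dot_self_nonneg v]
    nlinarith [vn_nonneg v, vn_nonneg ((Yᵀ*X) *ᵥ v), hGv, htri, hTlow, hGlow]
  intro u w huw
  have hsub : (Yᵀ*X) *ᵥ (u - w) = 0 := by
    rw [Matrix.mulVec_sub, huw, sub_self]
  have h0 := hest (u - w)
  rw [hsub] at h0
  have hvn0 : vn (0 : Fin d → ℝ) = 0 := by
    unfold vn; rw [zero_dotProduct, Real.sqrt_zero]
  rw [hvn0] at h0
  have : vn (u - w) ≤ 0 := by nlinarith [vn_nonneg (u - w)]
  have := vn_zero (le_antisymm this (vn_nonneg _))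
  exact sub_eq_zero.mp this

end AuxProof

/-- If `X, Y ∈ O(d)^{⊗n}` both lie in `N_ε` around the ground truth
`Z ∈ O(d)^{⊗n}`, `Q = sgn(YᵀX)`, and `ε ≤ 1/√2`, then
`‖Zᵀ(X - YQ)‖_F ≤ 2ε√n · d_F(X, Y)`. -/
theorem aligned_difference_bound {d n : ℕ} (Z X Y : Matrix (Fin n × Fin d) (Fin d) ℝ)
    (hZ : BlockOrtho Z) (hX : BlockOrtho X) (hY : BlockOrtho Y)
    (ε : ℝ) (hε : ε ≤ 1 / Real.sqrt 2)
    (hXN : dF X Z ≤ ε * Real.sqrt n) (hYN : dF Y Z ≤ ε * Real.sqrt n) :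
    frob (Zᵀ * (X - Y * msgn (Yᵀ * X))) ≤ 2 * ε * Real.sqrt n * dF X Y := by
  open AuxProof in
  rcases Nat.eq_zero_or_pos n with hn0 | hn
  · subst hn0
    have hLHS : Zᵀ * (X - Y * msgn (Yᵀ * X)) = 0 := by
      ext a b
      rw [Matrix.mul_apply]
      have : (Finset.univ : Finset (Fin 0 × Fin d)) = ∅ := by
        ext p; exact absurd p.1.2 (by omega)
      rw [this, Finset.sum_empty, Matrix.zero_apply]
    rw [hLHS]
    have h0 : frob (0 : Matrix (Fin d) (Fin d) ℝ) = 0 := by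
      unfold frob; simp
    rw [h0, Nat.cast_zero, Real.sqrt_zero]
    ring_nf
    exact le_refl 0
  -- main case
  have hZZ := AuxProof.blockOrtho_mul_self hZ
  have hXX := AuxProof.blockOrtho_mul_self hX
  have hYY := AuxProof.blockOrtho_mul_self hY
  have hn1 : (1:ℝ) ≤ n := by exact_mod_cast hn
  have hsn : (0:ℝ) < Real.sqrt n := Real.sqrt_pos.mpr (by linarith)
  have hs : Real.sqrt n * Real.sqrt n = n := Real.mul_self_sqrt (Nat.cast_nonneg n)
  have hε0 : 0 ≤ ε := by
    by_contra hneg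
    push_neg at hneg
    have h1 := AuxProof.dF_nonneg X Z
    nlinarith
  have hε71 : ε ≤ 71/100 := by
    have hsq2 : Real.sqrt 2 ^ 2 = 2 := Real.sq_sqrt (by norm_num)
    have hs2nn : (0:ℝ) ≤ Real.sqrt 2 := Real.sqrt_nonneg 2
    have h2 : (100/71:ℝ) ≤ Real.sqrt 2 := by nlinarith
    have h3 : 0 < Real.sqrt 2 := by nlinarith
    have h4 : 1 / Real.sqrt 2 ≤ 71/100 := by
      rw [div_le_iff₀ h3]
      nlinarith
    linarith
  -- choose Q₁, Q₂ within δ₀ = √n/100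
  obtain ⟨Q₁, hQ₁o, hQ₁b⟩ := AuxProof.exists_dF_lt
    (show dF X Z < ε * Real.sqrt n + Real.sqrt n / 100 by linarith)
  obtain ⟨Q₂, hQ₂o, hQ₂b⟩ := AuxProof.exists_dF_lt
    (show dF Y Z < ε * Real.sqrt n + Real.sqrt n / 100 by linarith)
  have hb₁ : frob (X - Z*Q₁) ≤ (72/100)*Real.sqrt n := by nlinarith
  have hb₂ : frob (Y - Z*Q₂) ≤ (72/100)*Real.sqrt n := by nlinarith
  have hdet : IsUnit (Yᵀ * X).det :=
    AuxProof.key_invertible hn hZZ hXX hYY hQ₁o hQ₂o hb₁ hb₂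
  set A := Yᵀ * X with hA
  set Q := msgn A with hQ
  have hQo : IsOrtho Q := AuxProof.msgn_ortho hdet
  set P := psdSqrt (AuxProof.psd_AtA A) with hP
  have hPh : P.IsHermitian := (AuxProof.posSemidef_psdSqrt (AuxProof.psd_AtA A)).1
  have hQtA : Qᵀ * A = P := AuxProof.msgn_transpose_mul hdet
  have htr : Matrix.trace P = ∑ i, hPh.eigenvalues i := AuxProof.trace_eq_sum_eig hPh
  have hfd : ∀ Q' : Matrix (Fin d) (Fin d) ℝ, IsOrtho Q' →
      frob (X - Y*Q')^2 = 2*((n:ℝ)*d) - 2 * Matrix.trace (Q'ᵀ * A) := by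
    intro Q' hQ'
    exact AuxProof.frob_diff_sq hXX hYY hQ'
  have hDQ : frob (X - Y*Q)^2 = 2*((n:ℝ)*d) - 2 * Matrix.trace P := by
    rw [hfd Q hQo, hQtA]
  have hopt : ∀ Q' : Matrix (Fin d) (Fin d) ℝ, IsOrtho Q' →
      frob (X - Y*Q) ≤ frob (X - Y*Q') := by
    intro Q' hQ'
    apply AuxProof.sq_le_sq' (frob_nonneg _)
    rw [hfd Q hQo, hfd Q' hQ', hQtA]
    have h5 : Matrix.trace (Q'ᵀ * A) ≤ Matrix.trace P := AuxProof.trace_orth_mul_le hdet hQ'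
    linarith
  have hDeq : dF X Y = frob (X - Y*Q) :=
    le_antisymm (AuxProof.dF_le hQo) (AuxProof.le_dF hopt)
  set D := dF X Y with hDdef
  have hD0 : 0 ≤ D := AuxProof.dF_nonneg X Y
  -- eigenvalue bounds
  have hop : ∀ v : Fin d → ℝ, ((A *ᵥ v) ⬝ᵥ (A *ᵥ v)) ≤ ((n:ℝ))^2 * (v ⬝ᵥ v) := by
    intro v
    rw [hA, ← Matrix.mulVec_mulVec]
    calc (Yᵀ *ᵥ (X *ᵥ v)) ⬝ᵥ (Yᵀ *ᵥ (X *ᵥ v)) ≤ n * ((X *ᵥ v) ⬝ᵥ (X *ᵥ v)) :=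
          AuxProof.dot_transpose_le hYY (X *ᵥ v)
      _ = n * (n * (v ⬝ᵥ v)) := by rw [AuxProof.dot_mulVec_self hXX]
      _ = ((n:ℝ))^2 * (v ⬝ᵥ v) := by ring
  have hμn : ∀ i, hPh.eigenvalues i ≤ n := fun i =>
    AuxProof.eig_le (Nat.cast_nonneg n) hop i
  have hμ0 : ∀ i, 0 ≤ hPh.eigenvalues i := fun i => AuxProof.eigenvalues_nonneg' A i
  -- second term
  have hY2 : Yᵀ * (X - Y*Q) = Q * (P - (n:ℝ) • 1) := by
    have hl : Yᵀ * (X - Y*Q) = A - (n:ℝ) • Q := by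
      rw [Matrix.mul_sub, ← Matrix.mul_assoc, hYY, ← hA, Matrix.smul_mul, Matrix.one_mul]
    have hr : Q * (P - (n:ℝ) • 1) = A - (n:ℝ) • Q := by
      rw [Matrix.mul_sub, Matrix.mul_smul, Matrix.mul_one]
      congr 1
      exact AuxProof.msgn_mul_sqrt hdet
    rw [hl, hr]
  have hfrob2 : frob (Yᵀ * (X - Y*Q)) = frob (P - (n:ℝ) • 1) := by
    rw [hY2, AuxProof.frob_orth_mul hQo.1]
  have hPn : frob (P - (n:ℝ) • 1) = Real.sqrt (∑ i, (hPh.eigenvalues i - n)^2) :=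
    AuxProof.frob_sub_smul_one hPh n
  have hsum : Real.sqrt (∑ i, (hPh.eigenvalues i - n)^2) ≤ ∑ i, ((n:ℝ) - hPh.eigenvalues i) := by
    have hnn : ∀ i ∈ Finset.univ, (0:ℝ) ≤ (n:ℝ) - hPh.eigenvalues i := fun i _ => by
      linarith [hμn i]
    have h6 : ∑ i, (hPh.eigenvalues i - n)^2 ≤ (∑ i, ((n:ℝ) - hPh.eigenvalues i))^2 := by
      calc ∑ i, (hPh.eigenvalues i - (n:ℝ))^2 = ∑ i, ((n:ℝ) - hPh.eigenvalues i)^2 := by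
            apply Finset.sum_congr rfl; intros; ring
        _ ≤ (∑ i, ((n:ℝ) - hPh.eigenvalues i))^2 := Finset.sum_sq_le_sq_sum_of_nonneg hnn
    calc Real.sqrt (∑ i, (hPh.eigenvalues i - n)^2)
        ≤ Real.sqrt ((∑ i, ((n:ℝ) - hPh.eigenvalues i))^2) := Real.sqrt_le_sqrt h6
      _ = ∑ i, ((n:ℝ) - hPh.eigenvalues i) := Real.sqrt_sq (Finset.sum_nonneg hnn)
  have htrsum : ∑ i, ((n:ℝ) - hPh.eigenvalues i) = (n:ℝ)*d - Matrix.trace P := by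
    rw [Finset.sum_sub_distrib, htr]
    congr 1
    rw [Finset.sum_const, Finset.card_univ]
    simp [mul_comm]
  have hterm2 : frob (Yᵀ * (X - Y*Q)) ≤ D^2/2 := by
    rw [hfrob2, hPn]
    have : (n:ℝ)*d - Matrix.trace P = frob (X - Y*Q)^2/2 := by linarith
    rw [hDeq]
    linarith [hsum, htrsum.symm ▸ this]
  -- final bound for every positive slack
  have hmain : ∀ δ : ℝ, 0 < δ → frob (Zᵀ * (X - Y * Q)) ≤ 2 * ε * Real.sqrt n * D + δ := by
    intro δ hδ
    set δ' := δ / (2*D + 2) with hδ'def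
    have hδ'pos : 0 < δ' := by positivity
    obtain ⟨Q₂', hQ₂'o, hQ₂'b⟩ := AuxProof.exists_dF_lt
      (show dF Y Z < ε * Real.sqrt n + δ' by linarith)
    obtain ⟨Q₁', hQ₁'o, hQ₁'b⟩ := AuxProof.exists_dF_lt
      (show dF X Z < ε * Real.sqrt n + δ' by linarith)
    have hZQ : frob (Z - Y*Q₂'ᵀ) = frob (Y - Z*Q₂') := by
      rw [← AuxProof.frob_mul_orth (A := Z - Y*Q₂'ᵀ) hQ₂'o.2, Matrix.sub_mul,
        Matrix.mul_assoc, hQ₂'o.1, Matrix.mul_one, AuxProof.frob_sub_comm]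
    have hZQb : frob (Z - Y*Q₂'ᵀ) ≤ ε * Real.sqrt n + δ' := by
      rw [hZQ]; linarith
    have hDle : D ≤ 2*(ε * Real.sqrt n + δ') := by
      have hQQo : IsOrtho (Q₂'ᵀ * Q₁') := AuxProof.ortho_mul (AuxProof.ortho_transpose hQ₂'o) hQ₁'o
      have hsplit2 : X - Y*(Q₂'ᵀ * Q₁') = (X - Z*Q₁') + ((Z - Y*Q₂'ᵀ)*Q₁') := by
        rw [Matrix.sub_mul, ← Matrix.mul_assoc]
        abel
      calc D ≤ frob (X - Y*(Q₂'ᵀ * Q₁')) := AuxProof.dF_le hQQo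
        _ = frob ((X - Z*Q₁') + ((Z - Y*Q₂'ᵀ)*Q₁')) := by rw [hsplit2]
        _ ≤ frob (X - Z*Q₁') + frob ((Z - Y*Q₂'ᵀ)*Q₁') := AuxProof.frob_add_le _ _
        _ = frob (X - Z*Q₁') + frob (Z - Y*Q₂'ᵀ) := by
            rw [AuxProof.frob_mul_orth hQ₁'o.2]
        _ ≤ 2*(ε * Real.sqrt n + δ') := by linarith
    have hsplit : Zᵀ * (X - Y * Q) = (Z - Y*Q₂'ᵀ)ᵀ * (X - Y*Q) + Q₂' * (Yᵀ * (X - Y*Q)) := by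
      rw [Matrix.transpose_sub, Matrix.transpose_mul, Matrix.transpose_transpose,
        Matrix.sub_mul, Matrix.mul_assoc]
      abel
    have ht1 : frob ((Z - Y*Q₂'ᵀ)ᵀ * (X - Y*Q)) ≤ (ε * Real.sqrt n + δ') * D := by
      calc frob ((Z - Y*Q₂'ᵀ)ᵀ * (X - Y*Q))
          ≤ frob ((Z - Y*Q₂'ᵀ)ᵀ) * frob (X - Y*Q) := AuxProof.frob_mul_le _ _
        _ = frob (Z - Y*Q₂'ᵀ) * frob (X - Y*Q) := by rw [AuxProof.frob_transpose]
        _ ≤ (ε * Real.sqrt n + δ') * D := by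
            rw [← hDeq]
            apply mul_le_mul hZQb (le_refl D) hD0 (by positivity)
    have ht2 : frob (Q₂' * (Yᵀ * (X - Y*Q))) ≤ D * (ε * Real.sqrt n + δ') := by
      rw [AuxProof.frob_orth_mul hQ₂'o.1]
      calc frob (Yᵀ * (X - Y*Q)) ≤ D^2/2 := hterm2
        _ ≤ D * (ε * Real.sqrt n + δ') := by nlinarith
    have hZD : 2*δ'*D ≤ δ := by
      have hcanc : δ' * (2*D+2) = δ := by
        rw [hδ'def]
        field_simp
      nlinarith [hδ'pos]
    calc frob (Zᵀ * (X - Y * Q))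
        = frob ((Z - Y*Q₂'ᵀ)ᵀ * (X - Y*Q) + Q₂' * (Yᵀ * (X - Y*Q))) := by rw [hsplit]
      _ ≤ frob ((Z - Y*Q₂'ᵀ)ᵀ * (X - Y*Q)) + frob (Q₂' * (Yᵀ * (X - Y*Q))) :=
          AuxProof.frob_add_le _ _
      _ ≤ (ε * Real.sqrt n + δ') * D + D * (ε * Real.sqrt n + δ') := by linarith
      _ = 2 * ε * Real.sqrt n * D + 2*δ'*D := by ring
      _ ≤ 2 * ε * Real.sqrt n * D + δ := by linarith
  by_contra hcon
  push_neg at hcon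
  have hgap : 0 < frob (Zᵀ * (X - Y * Q)) - 2 * ε * Real.sqrt n * D := by linarith
  have := hmain _ (half_pos hgap)
  linarith

end
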